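/- Consider the Evaluator Machine for □_{[t1,t2]} α (with t1 ≤ t2) whose queue Q evolves as: at each time step prepend M at index 0; if α fails at the current time, set all cells in index range [t1,t2] to ⊥; if α holds at the current time, set the cell at index t2 to ⊤ only if its current value is M; cells at indices > t2 are never modified. Then for all times i ≥ t2+1: Q^i[t2+1] = ⊤ iff for all j ∈ [i−t2−1+t1, i−1], α holds at time j in x; and Q^i[t2+1] = ⊥ otherwise. -/
import Mathlib


/-- Queue cell values: `⊤`, `⊥`, or `Maybe`. -/
inductive Cell : Type
  | top : Cell
  | bot : Cell
  | maybe : Cell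
deriving DecidableEq

/-- `run step i` is the queue contents after performing the steps of times `0, 1, …, i`
starting from the empty queue. -/
def run (step : ℕ → List Cell → List Cell) : ℕ → List Cell
  | 0 => step 0 []
  | i + 1 => step (i + 1) (run step i)

/-- Set every cell with index in `[a, b]` to `v`. -/
def setRange (a b : ℕ) (v : Cell) (q : List Cell) : List Cell :=
  q.mapIdx fun j c => if a ≤ j ∧ j ≤ b then v else c

/-- Set the cell at index `k` to `v`, but only if its current value is `Maybe`. -/
def setIfMaybe (k : ℕ) (v : Cell) (q : List Cell) : List Cell :=
  q.mapIdx fun j c => if j = k ∧ c = Cell.maybe then v else c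

/-- Set every cell with index in `[a, b]` whose current value is `Maybe` to `v`. -/
def setRangeIfMaybe (a b : ℕ) (v : Cell) (q : List Cell) : List Cell :=
  q.mapIdx fun j c => if (a ≤ j ∧ j ≤ b) ∧ c = Cell.maybe then v else c

/-- One step of the Evaluator Machine for `□_{[t1,t2]} α` at time `i`: prepend `Maybe`;
if `α` holds at time `i`, set the cell at index `t2` to `⊤` only if it is `Maybe`;
if `α` fails at time `i`, set all cells with indices in `[t1, t2]` to `⊥`.
Cells at indices `> t2` are never modified. -/
def boxStep (α : ℕ → Bool) (t1 t2 : ℕ) (i : ℕ) (q : List Cell) : List Cell :=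
  let q' := Cell.maybe :: q
  if α i then setIfMaybe t2 Cell.top q' else setRange t1 t2 Cell.bot q'

open scoped Classical in
noncomputable def cellVal (α : ℕ → Bool) (t1 t2 i k : ℕ) : Cell :=
  if ∀ j, i + t1 ≤ j + k → j ≤ i → α j = true then
    (if k = t2 then Cell.top else Cell.maybe)
  else Cell.bot

lemma boxStep_zero (α : ℕ → Bool) (t1 t2 : ℕ) (h12 : t1 ≤ t2) (m : ℕ) (q : List Cell) :
    (boxStep α t1 t2 m q)[0]? = some (cellVal α t1 t2 m 0) := by
  have hcond : (∀ j, m + t1 ≤ j + 0 → j ≤ m → α j = true) ↔ (t1 = 0 → α m = true) := by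
    constructor
    · intro h ht; exact h m (by omega) le_rfl
    · intro h j h1 h2
      have : t1 = 0 ∧ j = m := by omega
      rcases this with ⟨ht, rfl⟩; exact h ht
  unfold boxStep cellVal
  cases hα : α m
  · simp only [Bool.false_eq_true, if_false, setRange, List.getElem?_mapIdx,
      List.getElem?_cons_zero, Option.map_some]
    by_cases ht : t1 = 0
    · rw [if_pos ⟨by omega, by omega⟩, if_neg]
      intro h
      have := hcond.mp h ht
      simp [hα] at this
    · rw [if_neg (by omega), if_pos (hcond.mpr (by simp [ht])), if_neg (by omega)]
  · simp only [if_true, setIfMaybe, List.getElem?_mapIdx,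
      List.getElem?_cons_zero, Option.map_some]
    rw [if_pos (hcond.mpr (fun _ => hα))]
    by_cases ht : (0 : ℕ) = t2
    · rw [if_pos ⟨ht, trivial⟩, if_pos ht]
    · rw [if_neg (fun h : _ ∧ True => ht h.1), if_neg ht]

lemma box_inv (α : ℕ → Bool) (t1 t2 : ℕ) (h12 : t1 ≤ t2) :
    ∀ i k, k ≤ i → k ≤ t2 →
      (run (boxStep α t1 t2) i)[k]? = some (cellVal α t1 t2 i k) := by
  intro i
  induction i with
  | zero =>
    intro k hk _
    interval_cases k
    exact boxStep_zero α t1 t2 h12 0 []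
  | succ i ih =>
    intro k hk hk2
    have hrun : run (boxStep α t1 t2) (i+1)
        = boxStep α t1 t2 (i+1) (run (boxStep α t1 t2) i) := rfl
    rw [hrun]
    match k with
    | 0 => exact boxStep_zero α t1 t2 h12 (i+1) _
    | k' + 1 =>
      have hrec := ih k' (by omega) (by omega)
      have hk't2 : k' ≠ t2 := by omega
      set q := run (boxStep α t1 t2) i with hq
      unfold boxStep
      cases hα : α (i+1)
      · -- α (i+1) = false : setRange
        simp only [Bool.false_eq_true, if_false, setRange, List.getElem?_mapIdx,
          List.getElem?_cons_succ, hrec, Option.map_some]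
        unfold cellVal
        by_cases ht : t1 ≤ k' + 1
        · rw [if_pos ⟨ht, by omega⟩, if_neg]
          intro h
          have := h (i+1) (by omega) le_rfl
          simp [hα] at this
        · rw [if_neg (by omega), if_neg hk't2]
          have hequiv : (∀ j, i + 1 + t1 ≤ j + (k' + 1) → j ≤ i + 1 → α j = true) ↔
              (∀ j, i + t1 ≤ j + k' → j ≤ i → α j = true) := by
            constructor
            · intro h j h1 h2; exact h j (by omega) (by omega)
            · intro h j h1 h2
              rcases Nat.lt_or_ge j (i+1) with hj | hj
              · exact h j (by omega) (by omega)
              · omega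
          by_cases hC : ∀ j, i + t1 ≤ j + k' → j ≤ i → α j = true
          · rw [if_pos hC, if_pos (hequiv.mpr hC), if_neg (by omega)]
          · rw [if_neg hC, if_neg (fun h => hC (hequiv.mp h))]
      · -- α (i+1) = true : setIfMaybe
        simp only [if_true, setIfMaybe, List.getElem?_mapIdx,
          List.getElem?_cons_succ, hrec, Option.map_some]
        unfold cellVal
        have hequiv : (∀ j, i + 1 + t1 ≤ j + (k' + 1) → j ≤ i + 1 → α j = true) ↔
            (∀ j, i + t1 ≤ j + k' → j ≤ i → α j = true) := by
          constructor
          · intro h j h1 h2; exact h j (by omega) (by omega)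
          · intro h j h1 h2
            rcases Nat.lt_or_ge j (i+1) with hj | hj
            · exact h j (by omega) (by omega)
            · have : j = i + 1 := by omega
              subst this; exact hα
        by_cases hC : ∀ j, i + t1 ≤ j + k' → j ≤ i → α j = true
        · rw [if_pos hC, if_neg hk't2, if_pos (hequiv.mpr hC)]
          by_cases h2 : k' + 1 = t2
          · rw [if_pos ⟨h2, rfl⟩, if_pos h2]
          · rw [if_neg (by simp [h2]), if_neg h2]
        · rw [if_neg hC, if_neg (by simp), if_neg (fun h => hC (hequiv.mp h))]

/-- Correctness of the Box Evaluator Machine: for all `i ≥ t2 + 1`, the cell at index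
`t2 + 1` equals `⊤` iff `α` holds at every time `j ∈ [i − t2 − 1 + t1, i − 1]`
(i.e. `x^{i−t2−1} ⊨ □_{[t1,t2]} α`), and equals `⊥` otherwise. -/
theorem box_EM_correct (α : ℕ → Bool) (t1 t2 : ℕ) (h12 : t1 ≤ t2)
    (i : ℕ) (hi : t2 + 1 ≤ i) :
    ((run (boxStep α t1 t2) i)[t2 + 1]? = some Cell.top ↔
      ∀ j, i - t2 - 1 + t1 ≤ j → j ≤ i - 1 → α j = true) ∧
    (¬ (∀ j, i - t2 - 1 + t1 ≤ j → j ≤ i - 1 → α j = true) →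
      (run (boxStep α t1 t2) i)[t2 + 1]? = some Cell.bot) := by
  obtain ⟨m, rfl⟩ : ∃ m, i = m + 1 := ⟨i - 1, by omega⟩
  have hm : t2 ≤ m := by omega
  have hrun : run (boxStep α t1 t2) (m+1)
      = boxStep α t1 t2 (m+1) (run (boxStep α t1 t2) m) := rfl
  have hrec := box_inv α t1 t2 h12 m t2 hm le_rfl
  have hval : (run (boxStep α t1 t2) (m+1))[t2+1]? = some (cellVal α t1 t2 m t2) := by
    rw [hrun]
    set q := run (boxStep α t1 t2) m with hq
    unfold boxStep
    cases hα : α (m+1)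
    · simp only [Bool.false_eq_true, if_false, setRange, List.getElem?_mapIdx,
        List.getElem?_cons_succ, hrec, Option.map_some]
      rw [if_neg (by omega : ¬ (t1 ≤ t2 + 1 ∧ t2 + 1 ≤ t2))]
    · simp only [if_true, setIfMaybe, List.getElem?_mapIdx,
        List.getElem?_cons_succ, hrec, Option.map_some]
      rw [if_neg (by simp : ¬ (t2 + 1 = t2 ∧ cellVal α t1 t2 m t2 = Cell.maybe))]
  rw [hval]
  have hequiv : (∀ j, m + t1 ≤ j + t2 → j ≤ m → α j = true) ↔
      (∀ j, m + 1 - t2 - 1 + t1 ≤ j → j ≤ m + 1 - 1 → α j = true) := by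
    constructor
    · intro h j h1 h2; exact h j (by omega) (by omega)
    · intro h j h1 h2; exact h j (by omega) (by omega)
  unfold cellVal
  by_cases hC : ∀ j, m + t1 ≤ j + t2 → j ≤ m → α j = true
  · rw [if_pos hC, if_pos rfl]
    constructor
    · constructor
      · intro _; exact hequiv.mp hC
      · intro _; rfl
    · intro h; exact absurd (hequiv.mp hC) h
  · rw [if_neg hC]
    constructor
    · constructor
      · intro h; cases h
      · intro h; exact absurd (hequiv.mpr h) hC
    · intro _; rfl
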